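/- For every real number q with 1/2 < q < 1 and every real μ with 0 < μ < q, the set S(μ) := { odd positive integers K : lb_K(q) < μ < ub_K(q) } is nonempty and finite; moreover, for all μ, μ' with 0 < μ ≤ μ' < q, the maximum element of S(μ') is at most the maximum element of S(μ). (That is, the optimal batch size K̄(μ) := max S(μ) is weakly decreasing in μ.) -/

import Mathlib

open Finset Filter

/-- Tail of a Binomial(K,q): probability of at least (K+1)/2 successes. -/
noncomputable def binTail (q : ℝ) (K : ℕ) : ℝ :=
  ∑ y ∈ Finset.Icc ((K + 1) / 2) K, (K.choose y : ℝ) * q ^ y * (1 - q) ^ (K - y)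

/-- Lower endpoint of the incentive-compatible prior interval for batch size K. -/
noncomputable def lb (q : ℝ) (K : ℕ) : ℝ := 1 - binTail q K

/-- Upper endpoint of the incentive-compatible prior interval for batch size K. -/
noncomputable def ub (q : ℝ) (K : ℕ) : ℝ :=
  q ^ 2 * (1 - binTail q K) /
    (q ^ 2 * (1 - binTail q K) + (1 - q) ^ 2 * binTail q K)


/-- Set of incentive-compatible odd batch sizes for prior μ. -/
def icSet (q μ : ℝ) : Set ℕ := {K : ℕ | Odd K ∧ 0 < K ∧ lb q K < μ ∧ μ < ub q K}

noncomputable def Bt (q : ℝ) (K y : ℕ) : ℝ := (K.choose y : ℝ) * q ^ y * (1 - q) ^ (K - y)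
noncomputable def St (q : ℝ) (K m : ℕ) : ℝ := ∑ y ∈ Finset.range m, Bt q K y
noncomputable def Lt (q : ℝ) (n : ℕ) : ℝ := St q (2*n+1) (n+1)

lemma Bt_succ {q : ℝ} {K y : ℕ} (hy : y < K) :
    Bt q (K+1) (y+1) = q * Bt q K y + (1-q) * Bt q K (y+1) := by
  unfold Bt
  rw [Nat.choose_succ_succ]
  have h2 : K - y = (K - (y+1)) + 1 := by omega
  push_cast
  rw [h2]
  simp only [Nat.succ_eq_add_one]
  ring

lemma St_rec {q : ℝ} {K m : ℕ} (hm : m ≤ K) :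
    St q (K+1) (m+1) = q * St q K m + (1-q) * St q K (m+1) := by
  have e1 : St q (K+1) (m+1) = ∑ y ∈ range m, Bt q (K+1) (y+1) + Bt q (K+1) 0 :=
    Finset.sum_range_succ' _ m
  have e2 : St q K (m+1) = ∑ y ∈ range m, Bt q K (y+1) + Bt q K 0 :=
    Finset.sum_range_succ' _ m
  have h0 : Bt q (K+1) 0 = (1-q) * Bt q K 0 := by
    unfold Bt; simp [pow_succ]; ring
  have hc : ∀ y ∈ range m, Bt q (K+1) (y+1) = q * Bt q K y + (1-q) * Bt q K (y+1) := by
    intro y hy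
    exact Bt_succ (lt_of_lt_of_le (mem_range.mp hy) hm)
  rw [e1, e2, Finset.sum_congr rfl hc, Finset.sum_add_distrib, h0]
  unfold St
  rw [← Finset.mul_sum, ← Finset.mul_sum]
  ring

lemma Lt_succ (q : ℝ) (n : ℕ) :
    Lt q (n+1) = Lt q n - ((2*n+1).choose (n+1) : ℝ) * (q*(1-q))^(n+1) * (2*q-1) := by
  have hL1 : Lt q (n+1) = St q (2*n+2+1) (n+1+1) := by
    unfold Lt
    rw [show 2*(n+1)+1 = 2*n+2+1 by omega]
  have e1 : St q (2*n+2+1) (n+1+1) = q * St q (2*n+2) (n+1) + (1-q) * St q (2*n+2) (n+1+1) :=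
    St_rec (by omega)
  have e2 : St q (2*n+1+1) (n+1) = q * St q (2*n+1) n + (1-q) * St q (2*n+1) (n+1) :=
    St_rec (by omega)
  have e3 : St q (2*n+1+1) (n+1+1) = q * St q (2*n+1) (n+1) + (1-q) * St q (2*n+1) (n+1+1) :=
    St_rec (by omega)
  rw [show 2*n+1+1 = 2*n+2 by omega] at e2 e3
  have hs2 : St q (2*n+1) (n+1) = St q (2*n+1) n + Bt q (2*n+1) n := Finset.sum_range_succ _ _
  have hs3 : St q (2*n+1) (n+1+1) = St q (2*n+1) (n+1) + Bt q (2*n+1) (n+1) :=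
    Finset.sum_range_succ _ _
  have hb : Bt q (2*n+1) n = ((2*n+1).choose (n+1) : ℝ) * (q^n * (1-q)^(n+1)) := by
    unfold Bt
    rw [show 2*n+1-n = n+1 by omega, Nat.choose_symm_half]
    ring
  have hc : Bt q (2*n+1) (n+1) = ((2*n+1).choose (n+1) : ℝ) * (q^(n+1) * (1-q)^n) := by
    unfold Bt
    rw [show 2*n+1-(n+1) = n by omega]
    ring
  have hLn : Lt q n = St q (2*n+1) (n+1) := rfl
  rw [hL1, e1, e2, e3, hs2, hs3, hb, hc, hLn, hs2, hb, mul_pow]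
  ring

lemma binTail_eq (q : ℝ) (n : ℕ) : binTail q (2*n+1) = 1 - Lt q n := by
  have htot : (∑ y ∈ range (2*n+2), Bt q (2*n+1) y) = 1 := by
    have h := add_pow q (1-q) (2*n+1)
    simp only [add_sub_cancel, one_pow] at h
    rw [show (2*n+1)+1 = 2*n+2 by omega] at h
    calc ∑ y ∈ range (2*n+2), Bt q (2*n+1) y
        = ∑ y ∈ range (2*n+2), q^y*(1-q)^(2*n+1-y)*((2*n+1).choose y : ℝ) := by
          apply Finset.sum_congr rfl; intro y _; unfold Bt; ring
      _ = 1 := h.symm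
  have hsplit : (∑ y ∈ range (n+1), Bt q (2*n+1) y) + (∑ y ∈ Icc (n+1) (2*n+1), Bt q (2*n+1) y)
      = ∑ y ∈ range (2*n+2), Bt q (2*n+1) y := by
    rw [Finset.range_eq_Ico, Finset.range_eq_Ico, ← Finset.Ico_add_one_right_eq_Icc,
      show 2*n+1+1 = 2*n+2 by omega]
    exact Finset.sum_Ico_consecutive (m := 0) (n := n+1) (k := 2*n+2) (fun y => Bt q (2*n+1) y) (by omega) (by omega)
  have hbt : binTail q (2*n+1) = ∑ y ∈ Icc (n+1) (2*n+1), Bt q (2*n+1) y := by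
    unfold binTail Bt
    rw [show (2*n+1+1)/2 = n+1 by omega]
  have hLt : Lt q n = ∑ y ∈ range (n+1), Bt q (2*n+1) y := rfl
  rw [hbt, hLt]
  linarith [htot, hsplit]

section Bounds
variable {q : ℝ} (hq : 1/2 < q) (hq1 : q < 1)
include hq hq1

lemma Bt_pos {K y : ℕ} (hy : y ≤ K) : 0 < Bt q K y := by
  unfold Bt
  have h1 : (0:ℝ) < (K.choose y : ℝ) := by
    exact_mod_cast Nat.choose_pos hy
  have h2 : (0:ℝ) < q := by linarith
  have h3 : (0:ℝ) < 1 - q := by linarith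
  positivity

lemma Lt_pos (n : ℕ) : 0 < Lt q n := by
  unfold Lt St
  apply Finset.sum_pos
  · intro y hy
    exact Bt_pos hq hq1 (by simp at hy; omega)
  · exact ⟨0, by simp⟩

lemma binTail_pos (n : ℕ) : 0 < binTail q (2*n+1) := by
  unfold binTail
  apply Finset.sum_pos
  · intro y hy
    simp only [mem_Icc] at hy
    have h1 : (0:ℝ) < ((2*n+1).choose y : ℝ) := by exact_mod_cast Nat.choose_pos hy.2
    have h2 : (0:ℝ) < q := by linarith
    have h3 : (0:ℝ) < 1 - q := by linarith
    positivity
  · exact ⟨n+1, by simp [mem_Icc]; omega⟩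

lemma Lt_lt_one (n : ℕ) : Lt q n < 1 := by
  have h1 := binTail_pos hq hq1 n
  have h2 := binTail_eq q n
  linarith

lemma Lt_succ_le (n : ℕ) : Lt q (n+1) ≤ Lt q n := by
  rw [Lt_succ]
  have h1 : (0:ℝ) ≤ ((2*n+1).choose (n+1) : ℝ) := by positivity
  have h2 : (0:ℝ) ≤ (q*(1-q))^(n+1) := by
    apply pow_nonneg; nlinarith
  nlinarith [mul_nonneg (mul_nonneg h1 h2) (by linarith : (0:ℝ) ≤ 2*q-1)]

lemma Lt_anti : Antitone (Lt q) := antitone_nat_of_succ_le (Lt_succ_le hq hq1)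

lemma Lt_zero : Lt q 0 = 1 - q := by
  unfold Lt St Bt
  simp

/-- single-term lower bound on the low tail -/
lemma Bn_le_Lt (n : ℕ) : ((2*n+1).choose (n+1) : ℝ) * (q*(1-q))^n * (1-q) ≤ Lt q n := by
  have h : Bt q (2*n+1) n ≤ Lt q n := by
    unfold Lt St
    apply Finset.single_le_sum (f := fun y => Bt q (2*n+1) y)
    · intro y hy
      exact (Bt_pos hq hq1 (by simp at hy; omega)).le
    · simp
  have hb : Bt q (2*n+1) n = ((2*n+1).choose (n+1) : ℝ) * (q*(1-q))^n * (1-q) := by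
    unfold Bt
    rw [show 2*n+1-n = n+1 by omega, Nat.choose_symm_half, mul_pow]
    ring
  linarith [hb ▸ h]

/-- single-term lower bound on the upper tail -/
lemma Bn1_le (n : ℕ) : ((2*n+1).choose (n+1) : ℝ) * (q*(1-q))^n * q ≤ 1 - Lt q n := by
  rw [← binTail_eq]
  have h : Bt q (2*n+1) (n+1) ≤ binTail q (2*n+1) := by
    have hbt : binTail q (2*n+1) = ∑ y ∈ Icc (n+1) (2*n+1), Bt q (2*n+1) y := by
      unfold binTail Bt
      rw [show (2*n+1+1)/2 = n+1 by omega]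
    rw [hbt]
    apply Finset.single_le_sum (f := fun y => Bt q (2*n+1) y)
    · intro y hy
      simp only [mem_Icc] at hy
      exact (Bt_pos hq hq1 hy.2).le
    · simp [mem_Icc]; omega
  have hc : Bt q (2*n+1) (n+1) = ((2*n+1).choose (n+1) : ℝ) * (q*(1-q))^n * q := by
    unfold Bt
    rw [show 2*n+1-(n+1) = n by omega, mul_pow]
    ring
  linarith [hc ▸ h]

/-- geometric decay of the low tail -/
lemma Lt_le_geom (n : ℕ) : Lt q n ≤ 2*(1-q) * (4*(q*(1-q)))^n := by
  have hq0 : (0:ℝ) < q := by linarith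
  have h1q : (0:ℝ) < 1 - q := by linarith
  have hterm : ∀ y ∈ range (n+1), Bt q (2*n+1) y ≤ ((2*n+1).choose y : ℝ) * (q^n * (1-q)^(n+1)) := by
    intro y hy
    simp only [mem_range] at hy
    have hyn : y ≤ n := by omega
    unfold Bt
    rw [show 2*n+1-y = (n+1)+(n-y) by omega, pow_add]
    have h2 : (1-q)^(n-y) ≤ q^(n-y) := pow_le_pow_left₀ h1q.le (by linarith) _
    have h3 : q^y * ((1-q)^(n+1) * (1-q)^(n-y)) ≤ q^y * ((1-q)^(n+1) * q^(n-y)) := by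
      apply mul_le_mul_of_nonneg_left (mul_le_mul_of_nonneg_left h2 (by positivity)) (by positivity)
    calc ((2*n+1).choose y : ℝ) * q^y * ((1-q)^(n+1) * (1-q)^(n-y))
        ≤ ((2*n+1).choose y : ℝ) * (q^y * ((1-q)^(n+1) * q^(n-y))) := by
          rw [mul_assoc]
          exact mul_le_mul_of_nonneg_left h3 (by positivity)
      _ = ((2*n+1).choose y : ℝ) * ((q^y * q^(n-y)) * (1-q)^(n+1)) := by ring
      _ = ((2*n+1).choose y : ℝ) * (q^n * (1-q)^(n+1)) := by
          rw [← pow_add, show y + (n-y) = n by omega]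
  have hsum : Lt q n ≤ (∑ y ∈ range (n+1), ((2*n+1).choose y : ℝ)) * (q^n * (1-q)^(n+1)) := by
    unfold Lt St
    rw [Finset.sum_mul]
    exact Finset.sum_le_sum hterm
  have hch : (∑ y ∈ range (n+1), ((2*n+1).choose y : ℝ)) ≤ 2^(2*n+1) := by
    have h1 : (∑ y ∈ range (n+1), ((2*n+1).choose y : ℝ))
        ≤ ∑ y ∈ range (2*n+2), ((2*n+1).choose y : ℝ) := by
      apply Finset.sum_le_sum_of_subset_of_nonneg
      · apply Finset.range_subset_range.mpr; omega
      · intro i _ _; positivity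
    have h2 : (∑ y ∈ range (2*n+2), ((2*n+1).choose y : ℝ)) = 2^(2*n+1) := by
      rw [← Nat.cast_sum]
      rw [show 2*n+2 = (2*n+1)+1 by omega, Nat.sum_range_choose]
      push_cast
      ring
    linarith
  have hfin : (2:ℝ)^(2*n+1) * (q^n * (1-q)^(n+1)) = 2*(1-q) * (4*(q*(1-q)))^n := by
    rw [mul_pow, mul_pow, pow_succ, pow_add, pow_mul]
    norm_num
    ring
  calc Lt q n ≤ (∑ y ∈ range (n+1), ((2*n+1).choose y : ℝ)) * (q^n * (1-q)^(n+1)) := hsum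
    _ ≤ 2^(2*n+1) * (q^n * (1-q)^(n+1)) := by
        apply mul_le_mul_of_nonneg_right hch (by positivity)
    _ = 2*(1-q) * (4*(q*(1-q)))^n := hfin

end Bounds

section Star
variable {q : ℝ} (hq : 1/2 < q) (hq1 : q < 1)
include hq hq1

/-- key overlap inequality between consecutive odd batch sizes -/
lemma star (n : ℕ) :
    Lt q n * (1-q)^2 * (1 - Lt q (n+1)) < (1 - Lt q n) * q^2 * Lt q (n+1) := by
  have hq0 : (0:ℝ) < q := by linarith
  have h1q : (0:ℝ) < 1 - q := by linarith
  have h2q : (0:ℝ) < 2*q - 1 := by linarith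
  set a := Lt q n with ha
  set C := ((2*n+1).choose (n+1) : ℝ) with hC
  have hsn : (0:ℝ) ≤ (q*(1-q))^n := by positivity
  have hCpos : (0:ℝ) ≤ C := by positivity
  have ha0 : 0 < a := Lt_pos hq hq1 n
  have ha1 : a < 1 := Lt_lt_one hq hq1 n
  have hb0 : 0 < Lt q (n+1) := Lt_pos hq hq1 (n+1)
  have hb1 : Lt q (n+1) < 1 := Lt_lt_one hq hq1 (n+1)
  have h1 : C * (q*(1-q))^n * (1-q) ≤ a := Bn_le_Lt hq hq1 n
  have h2 : C * (q*(1-q))^n * q ≤ 1 - a := Bn1_le hq hq1 n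
  rw [Lt_succ] at hb0 hb1 ⊢
  set D := C * (q*(1-q))^(n+1) * (2*q-1) with hD
  have hDq : D * (1-a) * q^2 ≤ (2*q-1) * q^3 * (a*(1-a)) := by
    have e : D * (1-a) * q^2 = ((2*q-1) * q^3 * (1-a)) * (C * (q*(1-q))^n * (1-q)) := by
      rw [hD, pow_succ]; ring
    rw [e]
    calc ((2*q-1) * q^3 * (1-a)) * (C * (q*(1-q))^n * (1-q))
        ≤ ((2*q-1) * q^3 * (1-a)) * a := by
          apply mul_le_mul_of_nonneg_left h1
            (mul_nonneg (mul_nonneg h2q.le (by positivity)) (by linarith))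
      _ = (2*q-1) * q^3 * (a*(1-a)) := by ring
  have hDb : D * a * (1-q)^2 ≤ (2*q-1) * (1-q)^3 * (a*(1-a)) := by
    have e : D * a * (1-q)^2 = ((2*q-1) * (1-q)^3 * a) * (C * (q*(1-q))^n * q) := by
      rw [hD, pow_succ]; ring
    rw [e]
    calc ((2*q-1) * (1-q)^3 * a) * (C * (q*(1-q))^n * q)
        ≤ ((2*q-1) * (1-q)^3 * a) * (1-a) := by
          apply mul_le_mul_of_nonneg_left h2
            (mul_nonneg (mul_nonneg h2q.le (by positivity)) ha0.le)
      _ = (2*q-1) * (1-q)^3 * (a*(1-a)) := by ring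
  have hfin : 0 < (2*q-1) * (a*(1-a)) * (1 - q^3 - (1-q)^3) := by
    have e : 1 - q^3 - (1-q)^3 = 3*(q*(1-q)) := by ring
    rw [e]
    have h : 0 < a * (1-a) := mul_pos ha0 (by linarith)
    have h3 : 0 < 3*(q*(1-q)) := by nlinarith
    exact mul_pos (mul_pos h2q h) h3
  nlinarith [hDq, hDb, hfin]

/-- membership characterization in terms of the low tail -/
lemma mem_iff (μ : ℝ) (hμ0 : 0 < μ) (hμ1 : μ < 1) (n : ℕ) :
    (2*n+1) ∈ icSet q μ ↔
      (Lt q n < μ ∧ μ*(1-q)^2*(1 - Lt q n) < (1-μ)*q^2*(Lt q n)) := by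
  have ha0 : 0 < Lt q n := Lt_pos hq hq1 n
  have ha1 : Lt q n < 1 := Lt_lt_one hq hq1 n
  have hlb : lb q (2*n+1) = Lt q n := by
    unfold lb; rw [binTail_eq]; ring
  have hub : ub q (2*n+1) = q^2 * Lt q n / (q^2 * Lt q n + (1-q)^2 * (1 - Lt q n)) := by
    unfold ub
    rw [binTail_eq]
    ring_nf
  have hden : 0 < q^2 * Lt q n + (1-q)^2 * (1 - Lt q n) := by
    have hq0 : (0:ℝ) < q := by linarith
    have h1q : (0:ℝ) < 1 - q := by linarith
    have h1a : (0:ℝ) < 1 - Lt q n := by linarith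
    positivity
  have hub_iff : μ < ub q (2*n+1) ↔ μ*(1-q)^2*(1 - Lt q n) < (1-μ)*q^2*(Lt q n) := by
    rw [hub, lt_div_iff₀ hden]
    constructor <;> intro h <;> nlinarith [h]
  constructor
  · rintro ⟨-, -, h3, h4⟩
    exact ⟨by rwa [hlb] at h3, hub_iff.mp h4⟩
  · rintro ⟨h3, h4⟩
    exact ⟨⟨n, rfl⟩, by omega, by rwa [hlb], hub_iff.mpr h4⟩

end Star

section Main
variable {q : ℝ} (hq : 1/2 < q) (hq1 : q < 1)
include hq hq1

lemma exists_Lt_lt (μ : ℝ) (hμ0 : 0 < μ) : ∃ n, Lt q n < μ := by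
  have hq0 : (0:ℝ) < q := by linarith
  have h1q : (0:ℝ) < 1 - q := by linarith
  have hr1 : 4*(q*(1-q)) < 1 := by nlinarith [sq_nonneg (2*q-1)]
  obtain ⟨N, hN⟩ := exists_pow_lt_of_lt_one (x := μ/(2*(1-q))) (by positivity) hr1
  refine ⟨N, lt_of_le_of_lt (Lt_le_geom hq hq1 N) ?_⟩
  rw [div_eq_mul_inv] at hN
  calc 2*(1-q) * (4*(q*(1-q)))^N < 2*(1-q) * (μ * (2*(1-q))⁻¹) := by
        apply mul_lt_mul_of_pos_left hN (by positivity)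
    _ = μ := by field_simp
  
lemma exists_good (μ : ℝ) (hμ0 : 0 < μ) (hμq : μ < q) (n0 : ℕ) (hbig : μ ≤ Lt q n0) :
    ∃ n, n0 < n ∧ (2*n+1) ∈ icSet q μ := by
  classical
  have hμ1 : μ < 1 := by linarith
  have hex := exists_Lt_lt hq hq1 μ hμ0
  set n := Nat.find hex with hn
  have hfind : Lt q n < μ := Nat.find_spec hex
  have hn0 : n0 < n := by
    by_contra hcon
    push_neg at hcon
    have := Lt_anti hq hq1 hcon
    linarith
  have hn1 : n - 1 + 1 = n := by omega
  have hprev : μ ≤ Lt q (n-1) := by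
    by_contra hcon
    push_neg at hcon
    exact absurd hcon (Nat.find_min hex (by omega))
  have hst := star hq hq1 (n-1)
  rw [hn1] at hst
  refine ⟨n, hn0, (mem_iff hq hq1 μ hμ0 hμ1 n).mpr ⟨hfind, ?_⟩⟩
  set a := Lt q (n-1)
  set b := Lt q n
  have ha1 : a < 1 := Lt_lt_one hq hq1 (n-1)
  have hb0 : 0 < b := Lt_pos hq hq1 n
  have hb1 : b < 1 := Lt_lt_one hq hq1 n
  have s1 : μ*(1-q)^2*(1-b) ≤ a*(1-q)^2*(1-b) := by
    apply mul_le_mul_of_nonneg_right (mul_le_mul_of_nonneg_right hprev (by positivity))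
      (by linarith)
  have s2 : (1-a)*q^2*b ≤ (1-μ)*q^2*b := by
    apply mul_le_mul_of_nonneg_right (mul_le_mul_of_nonneg_right (by linarith) (by positivity))
      hb0.le
  linarith

lemma nonempty_ic (μ : ℝ) (hμ0 : 0 < μ) (hμq : μ < q) : (icSet q μ).Nonempty := by
  have hq0 : (0:ℝ) < q := by linarith
  have h1q : (0:ℝ) < 1 - q := by linarith
  have hμ1 : μ < 1 := by linarith
  by_cases h : Lt q 0 < μ
  · refine ⟨2*0+1, (mem_iff hq hq1 μ hμ0 hμ1 0).mpr ⟨h, ?_⟩⟩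
    rw [Lt_zero hq hq1]
    have key : 0 < q*(1-q)*(q-μ) := by
      apply mul_pos (mul_pos hq0 h1q) (by linarith)
    nlinarith [key]
  · push_neg at h
    obtain ⟨n, -, hmem⟩ := exists_good hq hq1 μ hμ0 hμq 0 h
    exact ⟨2*n+1, hmem⟩

lemma finite_ic (μ : ℝ) (hμ0 : 0 < μ) (hμq : μ < q) : (icSet q μ).Finite := by
  have hq0 : (0:ℝ) < q := by linarith
  have h1q : (0:ℝ) < 1 - q := by linarith
  have hμ1 : μ < 1 := by linarith
  have hr1 : 4*(q*(1-q)) < 1 := by nlinarith [sq_nonneg (2*q-1)]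
  obtain ⟨N, hN⟩ := exists_pow_lt_of_lt_one (x := μ*(1-q)/(2*q)) (by positivity) hr1
  rw [lt_div_iff₀ (by positivity)] at hN
  apply Set.Finite.subset (Set.finite_Iio (2*N+2))
  intro K hK
  obtain ⟨m, hm⟩ := hK.1
  subst hm
  have hmem := (mem_iff hq hq1 μ hμ0 hμ1 m).mp hK
  simp only [Set.mem_Iio]
  by_contra hcon
  push_neg at hcon
  have hmN : N ≤ m := by omega
  set L := Lt q m with hL
  have hP := hmem.2
  have hL0 : 0 < L := Lt_pos hq hq1 m
  have hLq : L ≤ 1 - q := by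
    have := Lt_anti hq hq1 (Nat.zero_le m)
    rw [Lt_zero hq hq1] at this
    exact this
  have hdec : L ≤ 2*(1-q)*(4*(q*(1-q)))^N := by
    calc L ≤ 2*(1-q)*(4*(q*(1-q)))^m := Lt_le_geom hq hq1 m
      _ ≤ 2*(1-q)*(4*(q*(1-q)))^N := by
          apply mul_le_mul_of_nonneg_left
            (pow_le_pow_of_le_one (by positivity) hr1.le hmN) (by positivity)
  -- contradiction chain: μ(1-q)²q ≤ μ(1-q)²(1-L) < (1-μ)q²L ≤ q²L ≤ q²·2(1-q)(4s)^N < μ(1-q)²q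
  have c1 : μ*(1-q)^2*q ≤ μ*(1-q)^2*(1-L) := by
    apply mul_le_mul_of_nonneg_left (by linarith) (by positivity)
  have c2 : (1-μ)*q^2*L ≤ q^2*L := by
    nlinarith [mul_nonneg (mul_nonneg hμ0.le (sq_nonneg q)) hL0.le]
  have c3 : q^2*L ≤ q^2*(2*(1-q)*(4*(q*(1-q)))^N) := by
    apply mul_le_mul_of_nonneg_left hdec (by positivity)
  have c4 : q^2*(2*(1-q)*(4*(q*(1-q)))^N) < μ*(1-q)^2*q := by
    have h := mul_lt_mul_of_pos_right hN (mul_pos hq0 h1q)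
    nlinarith [h]
  linarith

end Main

/-- For every prior 0 < μ < q, the set of incentive-compatible batch sizes is nonempty
and finite, and its maximum K̄(μ) is weakly decreasing in μ. -/
theorem optimal_batch_size_antitone (q : ℝ) (hq : 1 / 2 < q) (hq1 : q < 1) :
    (∀ μ : ℝ, 0 < μ → μ < q → (icSet q μ).Nonempty ∧ (icSet q μ).Finite) ∧
      ∀ μ μ' : ℝ, 0 < μ → μ ≤ μ' → μ' < q →
        sSup (icSet q μ') ≤ sSup (icSet q μ) := by

  have hq' : 1/2 < q := hq
  constructor
  · exact fun μ h1 h2 => ⟨nonempty_ic hq' hq1 μ h1 h2, finite_ic hq' hq1 μ h1 h2⟩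
  · intro μ μ' hμ0 hμμ' hμ'q
    have hμ'0 : 0 < μ' := lt_of_lt_of_le hμ0 hμμ'
    have hμq : μ < q := lt_of_le_of_lt hμμ' hμ'q
    have hμ1 : μ < 1 := by linarith
    have hμ'1 : μ' < 1 := by linarith
    have hbdd' : BddAbove (icSet q μ') := (finite_ic hq' hq1 μ' hμ'0 hμ'q).bddAbove
    have hbdd : BddAbove (icSet q μ) := (finite_ic hq' hq1 μ hμ0 hμq).bddAbove
    have hKmem : sSup (icSet q μ') ∈ icSet q μ' :=
      Nat.sSup_mem (nonempty_ic hq' hq1 μ' hμ'0 hμ'q) hbdd'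
    obtain ⟨n', hn'⟩ := hKmem.1
    rw [hn'] at hKmem ⊢
    have hmem' := (mem_iff hq' hq1 μ' hμ'0 hμ'1 n').mp hKmem
    by_cases h : Lt q n' < μ
    · -- same K works for μ
      apply le_csSup hbdd
      refine (mem_iff hq' hq1 μ hμ0 hμ1 n').mpr ⟨h, ?_⟩
      set L := Lt q n'
      have hL0 : 0 < L := Lt_pos hq' hq1 n'
      have hL1 : L < 1 := Lt_lt_one hq' hq1 n'
      have hP' := hmem'.2
      have s1 : μ*(1-q)^2*(1-L) ≤ μ'*(1-q)^2*(1-L) := by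
        apply mul_le_mul_of_nonneg_right (mul_le_mul_of_nonneg_right hμμ' (by positivity))
          (by linarith)
      have s2 : (1-μ')*q^2*L ≤ (1-μ)*q^2*L := by
        apply mul_le_mul_of_nonneg_right (mul_le_mul_of_nonneg_right (by linarith) (by positivity))
          hL0.le
      linarith
    · push_neg at h
      obtain ⟨n, hnn', hmem⟩ := exists_good hq' hq1 μ hμ0 hμq n' h
      calc 2*n'+1 ≤ 2*n+1 := by omega
        _ ≤ sSup (icSet q μ) := le_csSup hbdd hmem
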